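/- (Multiplicative noise) Let A be a metric space, let f : ℝ^d × A → ℝ^d be continuous with f_j(x,a) ≠ 0 for all (x,a) ∈ ℝ^d × A and all coordinates j = 1,…,d, and let μ be a Borel probability measure on ℝ^d that is absolutely continuous with respect to Lebesgue measure on ℝ^d. Then the stochastic kernel T on ℝ^d given ℝ^d × A defined by T(B|x,a) = μ({ξ ∈ ℝ^d : (ξ₁ f₁(x,a), …, ξ_d f_d(x,a)) ∈ B}) for Borel B ⊂ ℝ^d is continuous in total variation: for every (x,a) ∈ ℝ^d × A, sup_{B ∈ B(ℝ^d)} |T(B|x',a') − T(B|x,a)| → 0 as (x',a') → (x,a). -/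

import Mathlib

open MeasureTheory Filter Topology Set

namespace MultNoiseAux

variable {d : ℕ}

/-- Componentwise multiplication map. -/
def dm (c : Fin d → ℝ) : (Fin d → ℝ) → (Fin d → ℝ) := fun ξ j => c j * ξ j

/-- Product of absolute values of the coordinates. -/
noncomputable def pabs (c : Fin d → ℝ) : ℝ := ∏ j, |c j|

lemma continuous_dm (c : Fin d → ℝ) : Continuous (dm c) :=
  continuous_pi fun j => continuous_const.mul (continuous_apply j)

lemma continuous_dm_left (ξ : Fin d → ℝ) : Continuous fun c : Fin d → ℝ => dm c ξ :=
  continuous_pi fun j => (continuous_apply j).mul continuous_const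

lemma dm_one (ξ : Fin d → ℝ) : dm 1 ξ = ξ := by funext j; simp [dm]

lemma pabs_pos {c : Fin d → ℝ} (hc : ∀ j, c j ≠ 0) : 0 < pabs c :=
  Finset.prod_pos fun j _ => abs_pos.2 (hc j)

lemma continuous_pabs : Continuous (pabs (d := d)) :=
  continuous_finset_prod _ fun j _ => (continuous_apply j).abs

lemma pabs_one : pabs (1 : Fin d → ℝ) = 1 := by simp [pabs]

lemma map_dm {c : Fin d → ℝ} (hc : ∀ j, c j ≠ 0) :
    Measure.map (dm c) volume = ENNReal.ofReal (pabs c)⁻¹ • volume := by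
  have hfun : dm c = ⇑(Matrix.toLin' (Matrix.diagonal c)) := by
    funext ξ j
    simp [dm, Matrix.toLin'_apply, Matrix.mulVec_diagonal]
  have hdet : LinearMap.det (Matrix.toLin' (Matrix.diagonal c)) = ∏ j, c j := by
    rw [LinearMap.det_toLin', Matrix.det_diagonal]
  have hdet0 : LinearMap.det (Matrix.toLin' (Matrix.diagonal c)) ≠ 0 := by
    rw [hdet]; exact Finset.prod_ne_zero_iff.2 fun j _ => hc j
  rw [hfun, Measure.map_linearMap_addHaar_eq_smul_addHaar volume hdet0, hdet]
  congr 1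
  rw [abs_inv, Finset.abs_prod]
  rfl

lemma integral_comp_dm {c : Fin d → ℝ} (hc : ∀ j, c j ≠ 0) {ψ : (Fin d → ℝ) → ℝ}
    (hψ : AEStronglyMeasurable ψ volume) :
    ∫ ξ, ψ (dm c ξ) = (pabs c)⁻¹ * ∫ ξ, ψ ξ := by
  have h1 : AEStronglyMeasurable ψ (Measure.map (dm c) volume) := by
    rw [map_dm hc]
    exact hψ.mono_ac Measure.smul_absolutelyContinuous
  rw [← integral_map (continuous_dm c).measurable.aemeasurable h1, map_dm hc,
    integral_smul_measure, ENNReal.toReal_ofReal (inv_nonneg.2 (le_of_lt (pabs_pos hc))),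
    smul_eq_mul]

lemma integrable_comp_dm {c : Fin d → ℝ} (hc : ∀ j, c j ≠ 0) {ψ : (Fin d → ℝ) → ℝ}
    (hψ : Integrable ψ volume) :
    Integrable (fun ξ => ψ (dm c ξ)) volume := by
  have h1 : Integrable ψ (Measure.map (dm c) volume) := by
    rw [map_dm hc]
    exact hψ.smul_measure ENNReal.ofReal_ne_top
  exact (integrable_map_measure h1.aestronglyMeasurable
    (continuous_dm c).measurable.aemeasurable).1 h1

lemma tendsto_D {φ : (Fin d → ℝ) → ℝ} (hcont : Continuous φ) (hsupp : HasCompactSupport φ) :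
    Tendsto (fun c => ∫ ξ, |φ (dm c ξ) - φ ξ|) (𝓝 1) (𝓝 0) := by
  obtain ⟨M, hM⟩ := hsupp.exists_bound_of_continuous hcont
  have hM0 : 0 ≤ M := le_trans (norm_nonneg _) (hM 0)
  obtain ⟨R₀, hR₀⟩ := hsupp.isBounded.subset_closedBall 0
  set R : ℝ := max R₀ 0 with hRdef
  have hR : tsupport φ ⊆ Metric.closedBall 0 R :=
    hR₀.trans (Metric.closedBall_subset_closedBall (le_max_left _ _))
  have hR0 : 0 ≤ R := le_max_right _ _
  have key := tendsto_integral_filter_of_dominated_convergence (μ := volume)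
    (l := 𝓝 (1 : Fin d → ℝ)) (F := fun c ξ => |φ (dm c ξ) - φ ξ|) (f := fun _ => (0 : ℝ))
    ((Metric.closedBall (0 : Fin d → ℝ) (2 * R)).indicator fun _ => 2 * M)
    (Eventually.of_forall fun c =>
      ((hcont.comp (continuous_dm c)).sub hcont).abs.aestronglyMeasurable)
    ?_ ?_ ?_
  · simpa using key
  · -- bound
    filter_upwards [Metric.closedBall_mem_nhds (1 : Fin d → ℝ) one_half_pos] with c hc
    refine Eventually.of_forall fun ξ => ?_
    rw [Real.norm_eq_abs, abs_abs]
    by_cases hξ : ξ ∈ Metric.closedBall (0 : Fin d → ℝ) (2 * R)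
    · rw [indicator_of_mem hξ, two_mul]
      exact (abs_sub _ _).trans (add_le_add (hM _) (hM _))
    · rw [indicator_of_notMem hξ]
      have hnorm : 2 * R < ‖ξ‖ := by
        simpa [Metric.mem_closedBall, dist_zero_right] using hξ
      have hφξ : φ ξ = 0 := by
        apply image_eq_zero_of_notMem_tsupport
        intro hmem
        have := hR hmem
        rw [Metric.mem_closedBall, dist_zero_right] at this
        linarith [hnorm, this, hR0]
      have hφL : φ (dm c ξ) = 0 := by
        apply image_eq_zero_of_notMem_tsupport
        intro hmem
        have hL : ‖dm c ξ‖ ≤ R := by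
          have := hR hmem
          rwa [Metric.mem_closedBall, dist_zero_right] at this
        have hbad : ‖ξ‖ ≤ 2 * R := by
          rw [pi_norm_le_iff_of_nonneg (by linarith)]
          intro j
          have hcj : |c j - 1| ≤ 1 / 2 := by
            have h1 : dist (c j) ((1 : Fin d → ℝ) j) ≤ dist c (1 : Fin d → ℝ) :=
              dist_le_pi_dist c 1 j
            rw [Metric.mem_closedBall] at hc
            have : dist (c j) (1 : ℝ) ≤ 1 / 2 := le_trans h1 hc
            simpa [Real.dist_eq] using this
          have hcj2 : (1 : ℝ) / 2 ≤ |c j| := by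
            have h2 : |(1 : ℝ)| - |c j| ≤ |(1 : ℝ) - c j| := abs_sub_abs_le_abs_sub 1 (c j)
            rw [abs_one, abs_sub_comm] at h2
            linarith
          have hcoord : |c j * ξ j| ≤ R := le_trans (norm_le_pi_norm (dm c ξ) j) hL
          rw [abs_mul] at hcoord
          have hξj : (0 : ℝ) ≤ |ξ j| := abs_nonneg _
          show |ξ j| ≤ 2 * R
          nlinarith
        linarith
      simp [hφξ, hφL]
  · -- integrability of the bound
    exact (IntegrableOn.integrable_indicator
      (integrableOn_const measure_closedBall_lt_top.ne) measurableSet_closedBall)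
  · -- pointwise limit
    refine Eventually.of_forall fun ξ => ?_
    have h1 : Tendsto (fun c : Fin d → ℝ => dm c ξ) (𝓝 1) (𝓝 ξ) := by
      have := (continuous_dm_left ξ).tendsto 1
      rwa [dm_one ξ] at this
    have h2 : Tendsto (fun c : Fin d → ℝ => φ (dm c ξ) - φ ξ) (𝓝 1) (𝓝 0) := by
      have := ((hcont.tendsto ξ).comp h1).sub (tendsto_const_nhds (x := φ ξ))
      simpa using this
    simpa using h2.abs

lemma tendsto_J {g : (Fin d → ℝ) → ℝ} (hg : Integrable g volume) :
    Tendsto (fun c => ∫ ξ, |g (dm c ξ) - g ξ|) (𝓝 1) (𝓝 0) := by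
  rw [Metric.tendsto_nhds]
  intro ε hε
  obtain ⟨φ, hφsupp, hφnear, hφcont, hφint⟩ :=
    hg.exists_hasCompactSupport_integral_sub_le (show (0 : ℝ) < ε / 4 by positivity)
  have hφnear' : ∫ ξ, |g ξ - φ ξ| ≤ ε / 4 := by
    simpa [Real.norm_eq_abs] using hφnear
  have hopen : ∀ᶠ c in 𝓝 (1 : Fin d → ℝ), ∀ j, c j ≠ 0 := by
    have hopen' : IsOpen {c : Fin d → ℝ | ∀ j, c j ≠ 0} := by
      have : {c : Fin d → ℝ | ∀ j, c j ≠ 0} = ⋂ j, (fun c : Fin d → ℝ => c j) ⁻¹' {0}ᶜ := by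
        ext c; simp
      rw [this]
      exact isOpen_iInter_of_finite fun j =>
        isOpen_compl_singleton.preimage (continuous_apply j)
    exact hopen'.mem_nhds (by simp)
  have hP2 : ∀ᶠ c in 𝓝 (1 : Fin d → ℝ), (pabs c)⁻¹ < 2 := by
    have hp : Tendsto (fun c : Fin d → ℝ => (pabs c)⁻¹) (𝓝 1) (𝓝 1) := by
      have := ((continuous_pabs.tendsto (1 : Fin d → ℝ)).inv₀ (by rw [pabs_one]; norm_num))
      simpa [pabs_one] using this
    exact hp.eventually_lt_const one_lt_two
  have hD := (tendsto_D hφcont hφsupp).eventually_lt_const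
    (show (0 : ℝ) < ε / 4 by positivity)
  filter_upwards [hopen, hP2, hD] with c hc hcP hcD
  have igL : Integrable (fun ξ => g (dm c ξ)) volume := integrable_comp_dm hc hg
  have iφL : Integrable (fun ξ => φ (dm c ξ)) volume := integrable_comp_dm hc hφint
  have hI1 : Integrable (fun ξ => |g (dm c ξ) - φ (dm c ξ)|) volume := (igL.sub iφL).abs
  have hI2 : Integrable (fun ξ => |φ (dm c ξ) - φ ξ|) volume := (iφL.sub hφint).abs
  have hI3 : Integrable (fun ξ => |φ ξ - g ξ|) volume := (hφint.sub hg).abs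
  have hI23 : Integrable (fun ξ => |φ (dm c ξ) - φ ξ| + |φ ξ - g ξ|) volume := hI2.add hI3
  have hmono : ∫ ξ, |g (dm c ξ) - g ξ| ≤
      ∫ ξ, (|g (dm c ξ) - φ (dm c ξ)| + (|φ (dm c ξ) - φ ξ| + |φ ξ - g ξ|)) := by
    refine integral_mono (igL.sub hg).abs (hI1.add hI23) fun ξ => ?_
    calc |g (dm c ξ) - g ξ| ≤ |g (dm c ξ) - φ (dm c ξ)| + |φ (dm c ξ) - g ξ| :=
          abs_sub_le _ _ _
      _ ≤ |g (dm c ξ) - φ (dm c ξ)| + (|φ (dm c ξ) - φ ξ| + |φ ξ - g ξ|) :=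
          add_le_add (le_refl _) (abs_sub_le _ _ _)
  rw [integral_add hI1 hI23, integral_add hI2 hI3] at hmono
  have e1 : ∫ ξ, |g (dm c ξ) - φ (dm c ξ)| ≤ 2 * (ε / 4) := by
    have := integral_comp_dm hc (ψ := fun ξ => |g ξ - φ ξ|)
      (hg.sub hφint).abs.aestronglyMeasurable
    rw [this]
    have hnn : 0 ≤ ∫ ξ, |g ξ - φ ξ| := integral_nonneg fun ξ => abs_nonneg _
    exact mul_le_mul (le_of_lt hcP) hφnear' hnn (by norm_num)
  have e3 : ∫ ξ, |φ ξ - g ξ| ≤ ε / 4 := by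
    have : (fun ξ => |φ ξ - g ξ|) = fun ξ => |g ξ - φ ξ| := by
      funext ξ; exact abs_sub_comm _ _
    rw [this]; exact hφnear'
  have hnn : 0 ≤ ∫ ξ, |g (dm c ξ) - g ξ| := integral_nonneg fun ξ => abs_nonneg _
  rw [Real.dist_eq, sub_zero, abs_of_nonneg hnn]
  linarith

lemma tendsto_K {g : (Fin d → ℝ) → ℝ} (hg : Integrable g volume) :
    Tendsto (fun e => ∫ ξ, |pabs e * g (dm e ξ) - g ξ|) (𝓝 1) (𝓝 0) := by
  have hopen : ∀ᶠ e in 𝓝 (1 : Fin d → ℝ), ∀ j, e j ≠ 0 := by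
    have hopen' : IsOpen {e : Fin d → ℝ | ∀ j, e j ≠ 0} := by
      have : {e : Fin d → ℝ | ∀ j, e j ≠ 0} = ⋂ j, (fun e : Fin d → ℝ => e j) ⁻¹' {0}ᶜ := by
        ext e; simp
      rw [this]
      exact isOpen_iInter_of_finite fun j =>
        isOpen_compl_singleton.preimage (continuous_apply j)
    exact hopen'.mem_nhds (by simp)
  refine squeeze_zero' (Eventually.of_forall fun e => integral_nonneg fun ξ => abs_nonneg _)
    (g := fun e => |pabs e - 1| * ((pabs e)⁻¹ * ∫ ξ, |g ξ|) + ∫ ξ, |g (dm e ξ) - g ξ|)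
    ?_ ?_
  · filter_upwards [hopen] with e he
    have igL : Integrable (fun ξ => g (dm e ξ)) volume := integrable_comp_dm he hg
    have hA : Integrable (fun ξ => |pabs e - 1| * |g (dm e ξ)|) volume := igL.abs.const_mul _
    have hB : Integrable (fun ξ => |g (dm e ξ) - g ξ|) volume := (igL.sub hg).abs
    have hmono : ∫ ξ, |pabs e * g (dm e ξ) - g ξ| ≤
        ∫ ξ, (|pabs e - 1| * |g (dm e ξ)| + |g (dm e ξ) - g ξ|) := by
      refine integral_mono ((igL.const_mul _).sub hg).abs (hA.add hB) fun ξ => ?_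
      calc |pabs e * g (dm e ξ) - g ξ|
          = |(pabs e - 1) * g (dm e ξ) + (g (dm e ξ) - g ξ)| := by ring_nf
        _ ≤ |(pabs e - 1) * g (dm e ξ)| + |g (dm e ξ) - g ξ| := abs_add_le _ _
        _ = |pabs e - 1| * |g (dm e ξ)| + |g (dm e ξ) - g ξ| := by rw [abs_mul]
    rw [integral_add hA hB, integral_const_mul] at hmono
    have habs : ∫ ξ, |g (dm e ξ)| = (pabs e)⁻¹ * ∫ ξ, |g ξ| :=
      integral_comp_dm he hg.abs.aestronglyMeasurable
    rw [habs] at hmono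
    exact hmono
  · have hp : Tendsto (pabs (d := d)) (𝓝 1) (𝓝 1) := by
      simpa [pabs_one] using continuous_pabs.tendsto (1 : Fin d → ℝ)
    have t1 : Tendsto (fun e : Fin d → ℝ => |pabs e - 1| * ((pabs e)⁻¹ * ∫ ξ, |g ξ|))
        (𝓝 1) (𝓝 (|1 - 1| * ((1 : ℝ)⁻¹ * ∫ ξ, |g ξ|))) :=
      ((hp.sub tendsto_const_nhds).abs).mul
        ((hp.inv₀ one_ne_zero).mul tendsto_const_nhds)
    have t1' : Tendsto (fun e : Fin d → ℝ => |pabs e - 1| * ((pabs e)⁻¹ * ∫ ξ, |g ξ|))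
        (𝓝 1) (𝓝 0) := by simpa using t1
    simpa using t1'.add (tendsto_J hg)

end MultNoiseAux

open MultNoiseAux

/-- **Multiplicative noise.** If `f : ℝ^d × A → ℝ^d` is continuous with all coordinates nonzero
and `μ` is a probability measure on `ℝ^d` absolutely continuous with respect to Lebesgue
measure, then the stochastic kernel `T(B|x,a) = μ({ξ : diag(ξ) f(x,a) ∈ B})` is continuous in
total variation. -/
theorem multiplicative_noise_tv_continuous
    {A : Type*} [MetricSpace A] {d : ℕ}
    (f : (Fin d → ℝ) → A → (Fin d → ℝ))
    (hf : Continuous fun p : (Fin d → ℝ) × A => f p.1 p.2)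
    (hfne : ∀ (x : Fin d → ℝ) (a : A) (j : Fin d), f x a j ≠ 0)
    (μ : Measure (Fin d → ℝ)) [IsProbabilityMeasure μ] (hμ : μ ≪ volume)
    (T : (Fin d → ℝ) × A → Measure (Fin d → ℝ))
    (hT : ∀ (x : Fin d → ℝ) (a : A) (B : Set (Fin d → ℝ)), MeasurableSet B →
      T (x, a) B = μ {ξ | (fun j => ξ j * f x a j) ∈ B}) :
    ∀ p : (Fin d → ℝ) × A,
      Filter.Tendsto
        (fun p' => ⨆ (B : Set (Fin d → ℝ)) (_ : MeasurableSet B),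
          |(T p' B).toReal - (T p B).toReal|)
        (𝓝 p) (𝓝 0) := by
  intro p
  obtain ⟨x, a⟩ := p
  have hc : ∀ j, f x a j ≠ 0 := hfne x a
  set c : Fin d → ℝ := f x a with hc_def
  set g : (Fin d → ℝ) → ℝ := fun ξ => (μ.rnDeriv volume ξ).toReal with hg_def
  have hg : Integrable g volume := Measure.integrable_toReal_rnDeriv
  set K : (Fin d → ℝ) → ℝ := fun e => ∫ ξ, |pabs e * g (dm e ξ) - g ξ| with hK_def
  have hKnn : ∀ e, 0 ≤ K e := fun e => integral_nonneg fun ξ => abs_nonneg _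
  set m : (Fin d → ℝ) × A → (Fin d → ℝ) := fun q j => f q.1 q.2 j / c j with hm_def
  have hm1 : m (x, a) = 1 := by
    funext j
    simp only [hm_def]
    exact div_self (hc j)
  have hmc : Continuous m := continuous_pi fun j => ((continuous_apply j).comp hf).div_const _
  have hmt : Tendsto (fun q => K (m q)) (𝓝 (x, a)) (𝓝 0) := by
    have h1 : Tendsto m (𝓝 (x, a)) (𝓝 1) := by rw [← hm1]; exact hmc.tendsto _
    exact (tendsto_K hg).comp h1
  -- key bound
  have keybound : ∀ (q : (Fin d → ℝ) × A) (B : Set (Fin d → ℝ)), MeasurableSet B →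
      |(T q B).toReal - (T (x, a) B).toReal| ≤ K (m q) := by
    intro q B hB
    have he : ∀ j, m q j ≠ 0 := fun j => div_ne_zero (hfne q.1 q.2 j) (hc j)
    set e : Fin d → ℝ := m q with he_def
    set S : Set (Fin d → ℝ) := dm c ⁻¹' B with hS_def
    have hS : MeasurableSet S := hB.preimage (continuous_dm c).measurable
    have hSe : MeasurableSet (dm e ⁻¹' S) := hS.preimage (continuous_dm e).measurable
    have hTq : T q B = μ (dm e ⁻¹' S) := by
      rw [hT q.1 q.2 B hB]
      congr 1
      ext ξ
      have hfun : (fun j => ξ j * f q.1 q.2 j) = dm c (dm e ξ) := by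
        funext j
        show ξ j * f q.1 q.2 j = c j * (e j * ξ j)
        have hej : e j = f q.1 q.2 j / c j := rfl
        rw [hej]
        field_simp
        rw [mul_div_cancel_right₀ _ (hc j)]
      simp only [mem_setOf_eq, hS_def, mem_preimage]
      rw [hfun]
    have hTp : T (x, a) B = μ S := by
      rw [hT x a B hB]
      congr 1
      ext ξ
      have hfun : (fun j => ξ j * f x a j) = dm c ξ := by
        funext j; simp [dm, mul_comm, hc_def]
      simp only [mem_setOf_eq, hS_def, mem_preimage]
      rw [hfun]
    have h1 : (T q B).toReal = ∫ ξ in dm e ⁻¹' S, g ξ ∂volume := by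
      rw [hTq, ← measureReal_def, ← Measure.setIntegral_toReal_rnDeriv hμ]
    have h2 : (T (x, a) B).toReal = ∫ ξ in S, g ξ ∂volume := by
      rw [hTp, ← measureReal_def, ← Measure.setIntegral_toReal_rnDeriv hμ]
    have key : ∫ ξ in S, g ξ ∂volume = pabs e * ∫ ξ in dm e ⁻¹' S, g (dm e ξ) ∂volume := by
      have hcomp := integral_comp_dm he (ψ := S.indicator g)
        ((hg.indicator hS).aestronglyMeasurable)
      rw [integral_indicator hS] at hcomp
      have hind : (fun ξ => S.indicator g (dm e ξ)) =
          (dm e ⁻¹' S).indicator (fun ξ => g (dm e ξ)) := by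
        funext ξ
        by_cases h : dm e ξ ∈ S <;> simp [Set.indicator, h]
      rw [hind, integral_indicator hSe] at hcomp
      rw [hcomp, ← mul_assoc, mul_inv_cancel₀ (pabs_pos he).ne', one_mul]
    have igL : Integrable (fun ξ => g (dm e ξ)) volume := integrable_comp_dm he hg
    have i1 : IntegrableOn g (dm e ⁻¹' S) volume := hg.integrableOn
    have i2 : IntegrableOn (fun ξ => pabs e * g (dm e ξ)) (dm e ⁻¹' S) volume :=
      (igL.const_mul _).integrableOn
    calc |(T q B).toReal - (T (x, a) B).toReal|
        = |∫ ξ in dm e ⁻¹' S, (g ξ - pabs e * g (dm e ξ)) ∂volume| := by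
          rw [h1, h2, key, ← integral_const_mul, ← integral_sub i1 i2]
      _ ≤ ∫ ξ in dm e ⁻¹' S, |g ξ - pabs e * g (dm e ξ)| ∂volume := by
          simpa [Real.norm_eq_abs] using
            norm_integral_le_integral_norm (μ := volume.restrict (dm e ⁻¹' S))
              (fun ξ => g ξ - pabs e * g (dm e ξ))
      _ ≤ ∫ ξ, |g ξ - pabs e * g (dm e ξ)| ∂volume :=
          setIntegral_le_integral (hg.sub (igL.const_mul _)).abs
            (Eventually.of_forall fun ξ => abs_nonneg _)
      _ = K (m q) := by
          simp only [hK_def, ← he_def]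
          exact integral_congr_ae (Eventually.of_forall fun ξ => abs_sub_comm _ _)
  refine squeeze_zero'
    (Eventually.of_forall fun q => Real.iSup_nonneg fun B => Real.iSup_nonneg fun _ => abs_nonneg _)
    (Eventually.of_forall fun q => ?_) hmt
  exact Real.iSup_le (fun B => Real.iSup_le (fun hB => keybound q B hB) (hKnn _)) (hKnn _)
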